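/- There is a continuous function f : (ℕ → Bool) → (ℕ → Bool) such that for every z : ℕ → Bool and every ordinal α: if the relation E_z on ℕ defined by E_z(n,m) ↔ z(2^n · 3^m) = true is a strict linear order which is well-founded and has order type α, then E_{f(z)} is a strict linear order which is well-founded and has order type α + ω. -/
import Mathlib

def Erel (z : ℕ → Bool) : ℕ → ℕ → Prop := fun n m => z (2 ^ n * 3 ^ m) = true

def fAux (z : ℕ → Bool) (k : ℕ) : Bool :=
  if padicValNat 2 k % 2 = 0 then
    (if padicValNat 3 k % 2 = 0 then
       z (2 ^ (padicValNat 2 k / 2) * 3 ^ (padicValNat 3 k / 2)) else true)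
  else
    (if padicValNat 3 k % 2 = 0 then false else decide (padicValNat 2 k < padicValNat 3 k))

def eSum : ℕ ≃ ℕ ⊕ ℕ where
  toFun k := if k % 2 = 0 then Sum.inl (k / 2) else Sum.inr (k / 2)
  invFun := Sum.elim (fun n => 2 * n) (fun n => 2 * n + 1)
  left_inv k := by by_cases h : k % 2 = 0 <;> simp only [h, if_true, if_false, Sum.elim_inl, Sum.elim_inr, reduceIte] <;> omega
  right_inv s := by
    rcases s with n | n
    · have h : 2 * n % 2 = 0 := by omega
      simp only [Sum.elim_inl, h, if_true, reduceIte, Sum.inl.injEq]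
      omega
    · have h : ¬ (2 * n + 1) % 2 = 0 := by omega
      simp only [Sum.elim_inr, h, if_false, reduceIte, Sum.inr.injEq]
      omega

lemma pv2 (a b : ℕ) : padicValNat 2 (2 ^ a * 3 ^ b) = a := by
  haveI : Fact (Nat.Prime 2) := ⟨Nat.prime_two⟩
  rw [padicValNat.mul (by positivity) (by positivity),
    padicValNat.prime_pow a,
    padicValNat.eq_zero_of_not_dvd]
  · ring
  · intro h
    have := Nat.Prime.dvd_of_dvd_pow Nat.prime_two h
    omega

lemma pv3 (a b : ℕ) : padicValNat 3 (2 ^ a * 3 ^ b) = b := by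
  haveI : Fact (Nat.Prime 3) := ⟨Nat.prime_three⟩
  rw [padicValNat.mul (by positivity) (by positivity),
    padicValNat.prime_pow b,
    padicValNat.eq_zero_of_not_dvd]
  · ring
  · intro h
    have := Nat.Prime.dvd_of_dvd_pow Nat.prime_three h
    omega

lemma key (z : ℕ → Bool) (n m : ℕ) :
    Erel (fAux z) n m ↔ Sum.Lex (Erel z) (· < ·) (eSum n) (eSum m) := by
  unfold Erel fAux eSum
  rw [pv2, pv3]
  by_cases hn : n % 2 = 0 <;> by_cases hm : m % 2 = 0 <;>
    simp [hn, hm, Sum.lex_inl_inl, Sum.lex_inr_inr, Sum.lex_inr_inl, Sum.Lex.sep, Erel]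
  omega

theorem exists_continuous_plus_omega :
    ∃ f : (ℕ → Bool) → (ℕ → Bool), Continuous f ∧
      ∀ (z : ℕ → Bool) (α : Ordinal) (h : IsWellOrder ℕ (Erel z)),
        @Ordinal.type ℕ (Erel z) h = α →
        ∃ h' : IsWellOrder ℕ (Erel (f z)),
          @Ordinal.type ℕ (Erel (f z)) h' = α + Ordinal.omega0 := by
  refine ⟨fAux, ?_, ?_⟩
  · apply continuous_pi
    intro k
    unfold fAux
    by_cases h1 : padicValNat 2 k % 2 = 0 <;> by_cases h2 : padicValNat 3 k % 2 = 0 <;>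
      simp only [h1, h2, if_true, if_false]
    · exact continuous_apply _
    · exact continuous_const
    · exact continuous_const
    · exact continuous_const
  · intro z α h htype
    haveI := h
    have iso : Erel (fAux z) ≃r Sum.Lex (Erel z) ((· < ·) : ℕ → ℕ → Prop) :=
      ⟨eSum, (key z _ _).symm⟩
    haveI h' : IsWellOrder ℕ (Erel (fAux z)) := iso.toRelEmbedding.isWellOrder
    refine ⟨h', ?_⟩
    have := Ordinal.type_eq.2 ⟨iso⟩
    rw [this, Ordinal.type_sum_lex, htype, Ordinal.type_nat_lt]
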